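/- Under the standard positivity assumptions (G ⪰ 0, R_k ⪰ δI, Q_k − L_kᵀR_k⁻¹L_k ⪰ 0 for all k), the backward Riccati recursion T_N = G, T_k = Δ(T_{k+1}) − Λ(T_{k+1})ᵀ Υ(T_{k+1})⁻¹ Λ(T_{k+1}), where Υ(T) = R + BᵀE[T|F_{k−1}]B + BᵀE[Tω|F_{k−1}]E + EᵀE[Tω|F_{k−1}]B + EᵀE[Tω²|F_{k−1}]E, Λ(T) = L + BᵀE[T|F_{k−1}]A + EᵀE[Tω|F_{k−1}]A + BᵀE[Tω|F_{k−1}]D + EᵀE[Tω²|F_{k−1}]D, and Δ(T) = Q + AᵀE[T|F_{k−1}]A + AᵀE[Tω|F_{k−1}]D + DᵀE[Tω|F_{k−1}]A + DᵀE[Tω²|F_{k−1}]D, produces symmetric positive semidefinite matrices T_k ⪰ 0 and Υ(T_{k+1}) ⪰ δI for all k; in particular the recursion is well-defined (Υ is invertible at each step). -/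

import Mathlib

open Matrix MeasureTheory Finset

/-- Entrywise conditional expectation of a random matrix. -/
noncomputable def cexpM {Ω : Type} {m0 : MeasurableSpace Ω} (μ : Measure Ω)
    (G : MeasurableSpace Ω) {a b : ℕ} (T : Ω → Matrix (Fin a) (Fin b) ℝ) :
    Ω → Matrix (Fin a) (Fin b) ℝ :=
  fun w => Matrix.of fun i j => (μ[fun v => T v i j | G]) w

/-- `Υ(T) = R + BᵀE[T|F]B + BᵀE[Tω|F]E + EᵀE[Tω|F]B + EᵀE[Tω²|F]E`. -/
noncomputable def UpsOp {Ω : Type} {m0 : MeasurableSpace Ω} (μ : Measure Ω)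
    (G : MeasurableSpace Ω) {n m : ℕ} (wn : Ω → ℝ) (R : Ω → Matrix (Fin m) (Fin m) ℝ)
    (B E : Ω → Matrix (Fin n) (Fin m) ℝ) (T : Ω → Matrix (Fin n) (Fin n) ℝ) :
    Ω → Matrix (Fin m) (Fin m) ℝ := fun w =>
  R w + (B w)ᵀ * cexpM μ G T w * B w
    + (B w)ᵀ * cexpM μ G (fun v => wn v • T v) w * E w
    + (E w)ᵀ * cexpM μ G (fun v => wn v • T v) w * B w
    + (E w)ᵀ * cexpM μ G (fun v => wn v ^ 2 • T v) w * E w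

/-- `Λ(T) = L + BᵀE[T|F]A + EᵀE[Tω|F]A + BᵀE[Tω|F]D + EᵀE[Tω²|F]D`. -/
noncomputable def LamOp {Ω : Type} {m0 : MeasurableSpace Ω} (μ : Measure Ω)
    (G : MeasurableSpace Ω) {n m : ℕ} (wn : Ω → ℝ) (L : Ω → Matrix (Fin m) (Fin n) ℝ)
    (A D : Ω → Matrix (Fin n) (Fin n) ℝ) (B E : Ω → Matrix (Fin n) (Fin m) ℝ)
    (T : Ω → Matrix (Fin n) (Fin n) ℝ) : Ω → Matrix (Fin m) (Fin n) ℝ := fun w =>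
  L w + (B w)ᵀ * cexpM μ G T w * A w
    + (E w)ᵀ * cexpM μ G (fun v => wn v • T v) w * A w
    + (B w)ᵀ * cexpM μ G (fun v => wn v • T v) w * D w
    + (E w)ᵀ * cexpM μ G (fun v => wn v ^ 2 • T v) w * D w

/-- `Δ(T) = Q + AᵀE[T|F]A + AᵀE[Tω|F]D + DᵀE[Tω|F]A + DᵀE[Tω²|F]D`. -/
noncomputable def DelOp {Ω : Type} {m0 : MeasurableSpace Ω} (μ : Measure Ω)
    (G : MeasurableSpace Ω) {n : ℕ} (wn : Ω → ℝ) (Q : Ω → Matrix (Fin n) (Fin n) ℝ)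
    (A D : Ω → Matrix (Fin n) (Fin n) ℝ) (T : Ω → Matrix (Fin n) (Fin n) ℝ) :
    Ω → Matrix (Fin n) (Fin n) ℝ := fun w =>
  Q w + (A w)ᵀ * cexpM μ G T w * A w
    + (A w)ᵀ * cexpM μ G (fun v => wn v • T v) w * D w
    + (D w)ᵀ * cexpM μ G (fun v => wn v • T v) w * A w
    + (D w)ᵀ * cexpM μ G (fun v => wn v ^ 2 • T v) w * D w

/-- transfer a quadratic-form atom `z ⬝ᵥ (Xᵀ * (M * Y)) *ᵥ y` to vector form. -/
lemma quad_transfer' {a b c : ℕ} (X : Matrix (Fin a) (Fin b) ℝ) (M : Matrix (Fin a) (Fin a) ℝ)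
    (Y : Matrix (Fin a) (Fin c) ℝ) (z : Fin b → ℝ) (y : Fin c → ℝ) :
    z ⬝ᵥ ((Xᵀ * (M * Y)) *ᵥ y) = (X *ᵥ z) ⬝ᵥ (M *ᵥ (Y *ᵥ y)) := by
  rw [← Matrix.mulVec_mulVec, ← Matrix.mulVec_mulVec, Matrix.dotProduct_mulVec,
    Matrix.vecMul_transpose]

/-- a.e. positive semidefiniteness from rational quadratic forms. -/
lemma ae_posSemidef {Ω : Type} {m0 : MeasurableSpace Ω} {μ : Measure Ω}
    {d : Type} [Fintype d] (M : Ω → Matrix d d ℝ)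
    (hsym : ∀ᵐ w ∂μ, (M w)ᵀ = M w)
    (h : ∀ x : d → ℚ, ∀ᵐ w ∂μ, 0 ≤ (fun i => (x i : ℝ)) ⬝ᵥ (M w *ᵥ fun i => (x i : ℝ))) :
    ∀ᵐ w ∂μ, (M w).PosSemidef := by
  have h' : ∀ᵐ w ∂μ, ∀ x : d → ℚ,
      0 ≤ (fun i => (x i : ℝ)) ⬝ᵥ (M w *ᵥ fun i => (x i : ℝ)) := ae_all_iff.mpr h
  filter_upwards [h', hsym] with w hw hs
  have key : ∀ y : d → ℝ, 0 ≤ y ⬝ᵥ (M w *ᵥ y) := by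
    have hc : Continuous fun y : d → ℝ => y ⬝ᵥ (M w *ᵥ y) := by
      simp only [dotProduct, Matrix.mulVec]
      exact continuous_finset_sum _ fun i _ =>
        (continuous_apply i).mul (continuous_finset_sum _ fun j _ =>
          continuous_const.mul (continuous_apply j))
    have hcl : IsClosed {y : d → ℝ | 0 ≤ y ⬝ᵥ (M w *ᵥ y)} :=
      isClosed_le continuous_const hc
    have hdense : Dense (Set.pi (Set.univ : Set d) fun _ => Set.range ((↑) : ℚ → ℝ)) :=
      dense_pi Set.univ fun _ _ => Rat.denseRange_cast
    have hsub : (Set.pi (Set.univ : Set d) fun _ => Set.range ((↑) : ℚ → ℝ)) ⊆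
        {y : d → ℝ | 0 ≤ y ⬝ᵥ (M w *ᵥ y)} := by
      intro y hy
      choose r hr using fun i => hy i (Set.mem_univ i)
      have hx := hw r
      rwa [show (fun i => ((r i : ℝ))) = y from funext hr] at hx
    intro y
    exact (hcl.closure_subset_iff.mpr hsub) (hdense y)
  refine Matrix.posSemidef_iff_dotProduct_mulVec.mpr ⟨?_, fun x => ?_⟩
  · rw [Matrix.IsHermitian, Matrix.conjTranspose_eq_transpose_of_trivial, hs]
  · simpa using key x

/-- the big quadratic-form identity. -/
lemma quad_id {n m : ℕ} (M0 M1 M2 Q A D : Matrix (Fin n) (Fin n) ℝ)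
    (B E : Matrix (Fin n) (Fin m) ℝ) (L : Matrix (Fin m) (Fin n) ℝ)
    (R : Matrix (Fin m) (Fin m) ℝ)
    (h0 : M0ᵀ = M0) (h1 : M1ᵀ = M1) (h2 : M2ᵀ = M2) (x : Fin n → ℝ) (u : Fin m → ℝ) :
    x ⬝ᵥ ((Q + Aᵀ * M0 * A + Aᵀ * M1 * D + Dᵀ * M1 * A + Dᵀ * M2 * D) *ᵥ x)
      + x ⬝ᵥ ((L + Bᵀ * M0 * A + Eᵀ * M1 * A + Bᵀ * M1 * D + Eᵀ * M2 * D)ᵀ *ᵥ u)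
      + (u ⬝ᵥ ((L + Bᵀ * M0 * A + Eᵀ * M1 * A + Bᵀ * M1 * D + Eᵀ * M2 * D) *ᵥ x)
      + u ⬝ᵥ ((R + Bᵀ * M0 * B + Bᵀ * M1 * E + Eᵀ * M1 * B + Eᵀ * M2 * E) *ᵥ u))
    = (x ⬝ᵥ (Q *ᵥ x) + x ⬝ᵥ (Lᵀ *ᵥ u) + (u ⬝ᵥ (L *ᵥ x) + u ⬝ᵥ (R *ᵥ u)))
      + ((A *ᵥ x + B *ᵥ u) ⬝ᵥ (M0 *ᵥ (A *ᵥ x + B *ᵥ u))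
        + (A *ᵥ x + B *ᵥ u) ⬝ᵥ (M1 *ᵥ (D *ᵥ x + E *ᵥ u))
        + (D *ᵥ x + E *ᵥ u) ⬝ᵥ (M1 *ᵥ (A *ᵥ x + B *ᵥ u))
        + (D *ᵥ x + E *ᵥ u) ⬝ᵥ (M2 *ᵥ (D *ᵥ x + E *ᵥ u))) := by
  simp only [Matrix.transpose_add, Matrix.transpose_mul, Matrix.transpose_transpose, h0, h1, h2,
    Matrix.add_mulVec, dotProduct_add, Matrix.mulVec_add, add_dotProduct, Matrix.mul_assoc,
    quad_transfer']
  ring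

section core
variable {Ω : Type} {m0 : MeasurableSpace Ω} {μ : Measure Ω} [IsProbabilityMeasure μ]

lemma stoch_nonneg {n : ℕ} (F : MeasurableSpace Ω) (hF : F ≤ m0)
    (ω : Ω → ℝ) (hωm : StronglyMeasurable[m0] ω)
    (hω1 : Integrable ω μ) (hω2 : Integrable (fun v => ω v ^ 2) μ)
    (T : Ω → Matrix (Fin n) (Fin n) ℝ) (C : ℝ)
    (hTm : ∀ i j, StronglyMeasurable[m0] fun v => T v i j)
    (hTb : ∀ v i j, |T v i j| ≤ C)
    (hTpsd : ∀ᵐ v ∂μ, (T v).PosSemidef)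
    (p q : Ω → Fin n → ℝ) (Cp Cq : ℝ)
    (hpm : ∀ i, StronglyMeasurable[F] fun v => p v i)
    (hqm : ∀ i, StronglyMeasurable[F] fun v => q v i)
    (hpb : ∀ v i, |p v i| ≤ Cp) (hqb : ∀ v i, |q v i| ≤ Cq) :
    ∀ᵐ w ∂μ, 0 ≤ p w ⬝ᵥ (cexpM μ F T w *ᵥ p w)
      + p w ⬝ᵥ (cexpM μ F (fun v => ω v • T v) w *ᵥ q w)
      + q w ⬝ᵥ (cexpM μ F (fun v => ω v • T v) w *ᵥ p w)
      + q w ⬝ᵥ (cexpM μ F (fun v => ω v ^ 2 • T v) w *ᵥ q w) := by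
  classical
  -- integrability of the basic entries
  have hTint : ∀ i j, Integrable (fun v => T v i j) μ := fun i j =>
    (integrable_const C).mono' ((hTm i j).aestronglyMeasurable (μ := μ))
      (ae_of_all _ fun v => by simpa [Real.norm_eq_abs] using hTb v i j)
  have hωTint : ∀ i j, Integrable (fun v => ω v * T v i j) μ := fun i j =>
    (hω1.norm.mul_const C).mono' ((hωm.mul (hTm i j)).aestronglyMeasurable (μ := μ))
      (ae_of_all _ fun v => by
        rw [norm_mul]
        exact mul_le_mul_of_nonneg_left
          (by simpa [Real.norm_eq_abs] using hTb v i j) (norm_nonneg _))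
  have hω2m : StronglyMeasurable[m0] fun v => ω v ^ 2 := by
    exact hωm.pow 2
  have hω2Tint : ∀ i j, Integrable (fun v => ω v ^ 2 * T v i j) μ := fun i j =>
    (hω2.mul_const C).mono' ((hω2m.mul (hTm i j)).aestronglyMeasurable (μ := μ))
      (ae_of_all _ fun v => by
        rw [norm_mul]
        refine mul_le_mul_of_nonneg_left
          (by simpa [Real.norm_eq_abs] using hTb v i j) (norm_nonneg _) |>.trans ?_
        rw [Real.norm_eq_abs, abs_of_nonneg (sq_nonneg _)])
  -- pull-out helper
  have key : ∀ (φ : Ω → ℝ) (c : ℝ), StronglyMeasurable[F] φ → (∀ v, |φ v| ≤ c) →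
      ∀ (g : Ω → ℝ), Integrable g μ →
        Integrable (fun v => φ v * g v) μ ∧
        (μ[fun v => φ v * g v|F]) =ᵐ[μ] fun w => φ w * (μ[g|F]) w := by
    intro φ c hφ hφb g hg
    have hint : Integrable (fun v => φ v * g v) μ :=
      (hg.norm.const_mul c).mono' ((hφ.mono hF).aestronglyMeasurable.mul hg.1)
        (ae_of_all _ fun v => by
          rw [norm_mul]
          exact mul_le_mul_of_nonneg_right (by simpa [Real.norm_eq_abs] using hφb v)
            (norm_nonneg _))
    exact ⟨hint, condExp_mul_of_stronglyMeasurable_left hφ hint hg⟩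
  -- per-pair identity
  have main : ∀ ij : Fin n × Fin n,
      Integrable (fun v => (p v ij.1 + ω v * q v ij.1) *
        ((p v ij.2 + ω v * q v ij.2) * T v ij.1 ij.2)) μ ∧
      (μ[fun v => (p v ij.1 + ω v * q v ij.1) *
        ((p v ij.2 + ω v * q v ij.2) * T v ij.1 ij.2)|F]) =ᵐ[μ]
      fun w => p w ij.1 * p w ij.2 * (μ[fun v => T v ij.1 ij.2|F]) w
        + p w ij.1 * q w ij.2 * (μ[fun v => ω v * T v ij.1 ij.2|F]) w
        + q w ij.1 * p w ij.2 * (μ[fun v => ω v * T v ij.1 ij.2|F]) w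
        + q w ij.1 * q w ij.2 * (μ[fun v => ω v ^ 2 * T v ij.1 ij.2|F]) w := by
    rintro ⟨i, j⟩
    have hpp := key (fun v => p v i * p v j) (Cp * Cp) ((hpm i).mul (hpm j))
      (fun v => by
        rw [abs_mul]
        exact mul_le_mul (hpb v i) (hpb v j) (abs_nonneg _) ((abs_nonneg _).trans (hpb v i)))
      _ (hTint i j)
    have hpq := key (fun v => p v i * q v j) (Cp * Cq) ((hpm i).mul (hqm j))
      (fun v => by
        rw [abs_mul]
        exact mul_le_mul (hpb v i) (hqb v j) (abs_nonneg _) ((abs_nonneg _).trans (hpb v i)))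
      _ (hωTint i j)
    have hqp := key (fun v => q v i * p v j) (Cq * Cp) ((hqm i).mul (hpm j))
      (fun v => by
        rw [abs_mul]
        exact mul_le_mul (hqb v i) (hpb v j) (abs_nonneg _) ((abs_nonneg _).trans (hqb v i)))
      _ (hωTint i j)
    have hqq := key (fun v => q v i * q v j) (Cq * Cq) ((hqm i).mul (hqm j))
      (fun v => by
        rw [abs_mul]
        exact mul_le_mul (hqb v i) (hqb v j) (abs_nonneg _) ((abs_nonneg _).trans (hqb v i)))
      _ (hω2Tint i j)
    have hfeq : (fun v => (p v i + ω v * q v i) * ((p v j + ω v * q v j) * T v i j))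
        =ᵐ[μ] ((fun v => p v i * p v j * T v i j)
          + (fun v => p v i * q v j * (ω v * T v i j)))
          + (fun v => q v i * p v j * (ω v * T v i j))
          + (fun v => q v i * q v j * (ω v ^ 2 * T v i j)) :=
      ae_of_all _ fun v => by simp only [Pi.add_apply]; ring
    refine ⟨(((hpp.1.add hpq.1).add hqp.1).add hqq.1).congr hfeq.symm, ?_⟩
    have c0 := condExp_congr_ae (m := F) hfeq
    have c1 := condExp_add (μ := μ) (m := F) hpp.1 hpq.1
    have c2 := condExp_add (μ := μ) (m := F) (hpp.1.add hpq.1) hqp.1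
    have c3 := condExp_add (μ := μ) (m := F) ((hpp.1.add hpq.1).add hqp.1) hqq.1
    filter_upwards [c0, c3, c2, c1, hpp.2, hpq.2, hqp.2, hqq.2] with w w0 w3 w2 w1 e0 e1 e2 e3
    rw [w0, w3, Pi.add_apply, w2, Pi.add_apply, w1, Pi.add_apply, e0, e1, e2, e3]
  have hsum := condExp_finsetSum (μ := μ) (m := F) (s := (univ : Finset (Fin n × Fin n)))
    (f := fun ij v => (p v ij.1 + ω v * q v ij.1) *
      ((p v ij.2 + ω v * q v ij.2) * T v ij.1 ij.2)) (fun ij _ => (main ij).1)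
  have hnn : (0 : Ω → ℝ) ≤ᵐ[μ] μ[∑ ij : Fin n × Fin n, (fun v =>
      (p v ij.1 + ω v * q v ij.1) * ((p v ij.2 + ω v * q v ij.2) * T v ij.1 ij.2))|F] := by
    refine condExp_nonneg ?_
    filter_upwards [hTpsd] with v hv
    have h := hv.dotProduct_mulVec_nonneg (fun i => p v i + ω v * q v i)
    have hval : (∑ ij : Fin n × Fin n, (fun v =>
        (p v ij.1 + ω v * q v ij.1) * ((p v ij.2 + ω v * q v ij.2) * T v ij.1 ij.2))) v
        = (fun i => p v i + ω v * q v i) ⬝ᵥ (T v *ᵥ fun i => p v i + ω v * q v i) := by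
      rw [Finset.sum_apply]
      simp only [dotProduct, Matrix.mulVec, Finset.mul_sum, Fintype.sum_prod_type]
      exact Finset.sum_congr rfl fun i _ => Finset.sum_congr rfl fun j _ => by ring
    show (0 : Ω → ℝ) v ≤ _
    rw [Pi.zero_apply, hval]
    simpa using h
  filter_upwards [hnn, hsum, ae_all_iff.mpr fun ij => (main ij).2] with w h0 h1 h2
  have hexp : p w ⬝ᵥ (cexpM μ F T w *ᵥ p w)
      + p w ⬝ᵥ (cexpM μ F (fun v => ω v • T v) w *ᵥ q w)
      + q w ⬝ᵥ (cexpM μ F (fun v => ω v • T v) w *ᵥ p w)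
      + q w ⬝ᵥ (cexpM μ F (fun v => ω v ^ 2 • T v) w *ᵥ q w)
      = ∑ ij : Fin n × Fin n,
        (p w ij.1 * p w ij.2 * (μ[fun v => T v ij.1 ij.2|F]) w
        + p w ij.1 * q w ij.2 * (μ[fun v => ω v * T v ij.1 ij.2|F]) w
        + q w ij.1 * p w ij.2 * (μ[fun v => ω v * T v ij.1 ij.2|F]) w
        + q w ij.1 * q w ij.2 * (μ[fun v => ω v ^ 2 * T v ij.1 ij.2|F]) w) := by
    simp only [cexpM, Matrix.of_apply, dotProduct, Matrix.mulVec, Matrix.smul_apply,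
      smul_eq_mul, Finset.mul_sum, Fintype.sum_prod_type, ← Finset.sum_add_distrib]
    exact Finset.sum_congr rfl fun i _ => Finset.sum_congr rfl fun j _ => by ring
  rw [hexp]
  calc (0 : ℝ) ≤ (μ[∑ ij : Fin n × Fin n, (fun v =>
        (p v ij.1 + ω v * q v ij.1) * ((p v ij.2 + ω v * q v ij.2) * T v ij.1 ij.2))|F]) w := h0
    _ = (∑ ij : Fin n × Fin n, μ[fun v =>
        (p v ij.1 + ω v * q v ij.1) * ((p v ij.2 + ω v * q v ij.2) * T v ij.1 ij.2)|F]) w := h1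
    _ = ∑ ij : Fin n × Fin n, (μ[fun v =>
        (p v ij.1 + ω v * q v ij.1) * ((p v ij.2 + ω v * q v ij.2) * T v ij.1 ij.2)|F]) w :=
      Finset.sum_apply _ _ _
    _ = _ := Finset.sum_congr rfl fun ij _ => h2 ij

end core

/-- coordinates of a measurable-matrix `mulVec` are measurable. -/
lemma mulVec_coord_sm {Ω : Type} {F : MeasurableSpace Ω} {a b : ℕ}
    (M : Ω → Matrix (Fin a) (Fin b) ℝ)
    (hM : ∀ i j, StronglyMeasurable[F] fun w => M w i j) (x : Fin b → ℝ) (i : Fin a) :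
    StronglyMeasurable[F] fun w => (M w *ᵥ x) i := by
  show StronglyMeasurable[F] fun w => ∑ j, M w i j * x j
  exact Finset.stronglyMeasurable_fun_sum _ fun j _ => (hM i j).mul_const (x j)

/-- entrywise bound for `mulVec`. -/
lemma mulVec_coord_bd {a b : ℕ} (M : Matrix (Fin a) (Fin b) ℝ) (C : ℝ)
    (hM : ∀ i j, |M i j| ≤ C) (x : Fin b → ℝ) (i : Fin a) :
    |(M *ᵥ x) i| ≤ C * ∑ j, |x j| := by
  show |∑ j, M i j * x j| ≤ _
  calc |∑ j, M i j * x j| ≤ ∑ j, |M i j * x j| := Finset.abs_sum_le_sum_abs _ _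
    _ ≤ ∑ j, C * |x j| := Finset.sum_le_sum fun j _ => by
        rw [abs_mul]; exact mul_le_mul_of_nonneg_right (hM i j) (abs_nonneg _)
    _ = C * ∑ j, |x j| := by rw [Finset.mul_sum]

/-- symmetry of the entrywise conditional expectation of an a.e. symmetric matrix. -/
lemma cexpM_symm {Ω : Type} {m0 : MeasurableSpace Ω} {μ : Measure Ω} {n : ℕ}
    (F : MeasurableSpace Ω) (S : Ω → Matrix (Fin n) (Fin n) ℝ)
    (hS : ∀ᵐ v ∂μ, (S v)ᵀ = S v) :
    ∀ᵐ w ∂μ, (cexpM μ F S w)ᵀ = cexpM μ F S w := by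
  have h1 : ∀ ij : Fin n × Fin n, ∀ᵐ w ∂μ,
      (μ[fun v => S v ij.1 ij.2|F]) w = (μ[fun v => S v ij.2 ij.1|F]) w := fun ij =>
    condExp_congr_ae (hS.mono fun v hv => (congrFun (congrFun hv ij.2) ij.1 : _))
  filter_upwards [ae_all_iff.mpr h1] with w hw
  ext i j
  exact hw (j, i)

/-- under the standard positivity assumptions (`G_N ⪰ 0`, `R_k ⪰ δ I`,
`Q_k - L_kᵀ R_k⁻¹ L_k ⪰ 0`) and boundedness/adaptedness of all data, a process `T`
satisfying the backward stochastic Riccati recursion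
`T_N = G_N`, `T_k = Δ(T_{k+1}) - Λ(T_{k+1})ᵀ Υ(T_{k+1})⁻¹ Λ(T_{k+1})` consists a.s. of
symmetric positive semidefinite matrices with `Υ(T_{k+1}) ⪰ δ I`; in particular
`Υ(T_{k+1})` is invertible at each step. -/
theorem stmt9 {Ω : Type} [m0 : MeasurableSpace Ω] (μ : Measure Ω) [IsProbabilityMeasure μ]
    {n m : ℕ} (N : ℕ) (δ : ℝ) (hδ : 0 < δ)
    (G : ℕ → MeasurableSpace Ω) (hGle : ∀ k, G k ≤ m0) (hGmono : Monotone G)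
    (wk : ℕ → Ω → ℝ)
    (hwmeas : ∀ k, StronglyMeasurable[G (k + 1)] (wk k))
    (hwint : ∀ k, Integrable (wk k) μ) (hw2int : ∀ k, Integrable (fun w => wk k w ^ 2) μ)
    (hw0 : ∀ k, μ[wk k | G k] =ᵐ[μ] fun _ => 0)
    (hw2 : ∀ k, μ[(fun w => wk k w ^ 2) | G k] =ᵐ[μ] fun _ => 1)
    (A D : ℕ → Ω → Matrix (Fin n) (Fin n) ℝ) (B E : ℕ → Ω → Matrix (Fin n) (Fin m) ℝ)
    (Q : ℕ → Ω → Matrix (Fin n) (Fin n) ℝ) (L : ℕ → Ω → Matrix (Fin m) (Fin n) ℝ)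
    (R : ℕ → Ω → Matrix (Fin m) (Fin m) ℝ) (GN : Ω → Matrix (Fin n) (Fin n) ℝ)
    (Cb : ℝ)
    (hmeas : ∀ k < N, ∀ i j,
      StronglyMeasurable[G k] (fun w => A k w i j) ∧
      StronglyMeasurable[G k] (fun w => D k w i j) ∧
      StronglyMeasurable[G k] (fun w => Q k w i j))
    (hmeasBE : ∀ k < N, ∀ i j,
      StronglyMeasurable[G k] (fun w => B k w i j) ∧
      StronglyMeasurable[G k] (fun w => E k w i j))
    (hmeasLR : ∀ k < N, (∀ i j, StronglyMeasurable[G k] (fun w => L k w i j)) ∧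
      ∀ i j, StronglyMeasurable[G k] (fun w => R k w i j))
    (hmeasGN : ∀ i j, StronglyMeasurable[G N] (fun w => GN w i j))
    (hbd : ∀ k < N, ∀ w, (∀ i j, |A k w i j| ≤ Cb) ∧ (∀ i j, |D k w i j| ≤ Cb) ∧
      (∀ i j, |B k w i j| ≤ Cb) ∧ (∀ i j, |E k w i j| ≤ Cb) ∧
      (∀ i j, |Q k w i j| ≤ Cb) ∧ (∀ i j, |L k w i j| ≤ Cb) ∧ ∀ i j, |R k w i j| ≤ Cb)
    (hbdGN : ∀ w i j, |GN w i j| ≤ Cb)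
    -- symmetry of the weights and standard positivity assumptions
    (hQsymm : ∀ k < N, ∀ w, (Q k w)ᵀ = Q k w) (hRsymm : ∀ k < N, ∀ w, (R k w)ᵀ = R k w)
    (hGNsymm : ∀ w, (GN w)ᵀ = GN w)
    (hGNpos : ∀ᵐ w ∂μ, (GN w).PosSemidef)
    (hRpos : ∀ k < N, ∀ᵐ w ∂μ,
      (R k w - δ • (1 : Matrix (Fin m) (Fin m) ℝ)).PosSemidef)
    (hQLpos : ∀ k < N, ∀ᵐ w ∂μ, (Q k w - (L k w)ᵀ * (R k w)⁻¹ * L k w).PosSemidef)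
    -- the Riccati process: bounded, adapted, terminal value and recursion
    (T : ℕ → Ω → Matrix (Fin n) (Fin n) ℝ) (CbT : ℝ)
    (hTmeas : ∀ k ≤ N, ∀ i j, StronglyMeasurable[G k] (fun w => T k w i j))
    (hTbd : ∀ k ≤ N, ∀ w i j, |T k w i j| ≤ CbT)
    (hTN : T N = GN)
    (hTrec : ∀ k < N, T k =ᵐ[μ] fun w =>
      DelOp μ (G k) (wk k) (Q k) (A k) (D k) (T (k + 1)) w
        - (LamOp μ (G k) (wk k) (L k) (A k) (D k) (B k) (E k) (T (k + 1)) w)ᵀ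
            * (UpsOp μ (G k) (wk k) (R k) (B k) (E k) (T (k + 1)) w)⁻¹
            * LamOp μ (G k) (wk k) (L k) (A k) (D k) (B k) (E k) (T (k + 1)) w) :
    (∀ k ≤ N, ∀ᵐ w ∂μ, (T k w)ᵀ = T k w ∧ (T k w).PosSemidef) ∧
    (∀ k < N, ∀ᵐ w ∂μ,
      (UpsOp μ (G k) (wk k) (R k) (B k) (E k) (T (k + 1)) w
          - δ • (1 : Matrix (Fin m) (Fin m) ℝ)).PosSemidef ∧
      IsUnit (UpsOp μ (G k) (wk k) (R k) (B k) (E k) (T (k + 1)) w)) := by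
  classical
  have hδ1 : (δ • (1 : Matrix (Fin m) (Fin m) ℝ)).PosDef := by
    rw [Matrix.smul_one_eq_diagonal]
    exact Matrix.posDef_diagonal_iff.mpr fun _ => hδ
  -- the induction step
  have step : ∀ k, k < N →
      (∀ᵐ v ∂μ, (T (k+1) v)ᵀ = T (k+1) v ∧ (T (k+1) v).PosSemidef) →
      ((∀ᵐ w ∂μ, (T k w)ᵀ = T k w ∧ (T k w).PosSemidef) ∧
       (∀ᵐ w ∂μ,
        (UpsOp μ (G k) (wk k) (R k) (B k) (E k) (T (k+1)) w
            - δ • (1 : Matrix (Fin m) (Fin m) ℝ)).PosSemidef ∧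
        IsUnit (UpsOp μ (G k) (wk k) (R k) (B k) (E k) (T (k+1)) w))) := by
    intro k hk hP
    have hT's : ∀ᵐ v ∂μ, (T (k+1) v)ᵀ = T (k+1) v := hP.mono fun v h => h.1
    have hT'p : ∀ᵐ v ∂μ, (T (k+1) v).PosSemidef := hP.mono fun v h => h.2
    have hT'm : ∀ i j, StronglyMeasurable[m0] fun v => T (k+1) v i j := fun i j =>
      (hTmeas (k+1) hk i j).mono (hGle (k+1))
    have hωm : StronglyMeasurable[m0] (wk k) := (hwmeas k).mono (hGle (k+1))
    -- symmetry of the three conditional matrices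
    have hsym0 := cexpM_symm (μ := μ) (G k) (T (k+1)) hT's
    have hsym1 := cexpM_symm (μ := μ) (G k) (fun v => wk k v • T (k+1) v)
      (hT's.mono fun v hv => by rw [Matrix.transpose_smul, hv])
    have hsym2 := cexpM_symm (μ := μ) (G k) (fun v => wk k v ^ 2 • T (k+1) v)
      (hT's.mono fun v hv => by rw [Matrix.transpose_smul, hv])
    -- R is a.e. positive definite
    have hRpd : ∀ᵐ w ∂μ, (R k w).PosDef := (hRpos k hk).mono fun w hw => by
      have h2 := Matrix.PosDef.posSemidef_add hw hδ1
      simpa using h2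
    -- symmetry of Υ and Δ
    have hUsym : ∀ᵐ w ∂μ, (UpsOp μ (G k) (wk k) (R k) (B k) (E k) (T (k+1)) w)ᵀ
        = UpsOp μ (G k) (wk k) (R k) (B k) (E k) (T (k+1)) w := by
      filter_upwards [hsym0, hsym1, hsym2] with w h0 h1 h2
      simp only [UpsOp, Matrix.transpose_add, Matrix.transpose_mul,
        Matrix.transpose_transpose, h0, h1, h2, hRsymm k hk w, Matrix.mul_assoc]
      abel
    have hDsym : ∀ᵐ w ∂μ, (DelOp μ (G k) (wk k) (Q k) (A k) (D k) (T (k+1)) w)ᵀ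
        = DelOp μ (G k) (wk k) (Q k) (A k) (D k) (T (k+1)) w := by
      filter_upwards [hsym0, hsym1, hsym2] with w h0 h1 h2
      simp only [DelOp, Matrix.transpose_add, Matrix.transpose_mul,
        Matrix.transpose_transpose, h0, h1, h2, hQsymm k hk w, Matrix.mul_assoc]
      abel
    -- Υ - δ or positive semidefinite
    have hUpsPsd : ∀ᵐ w ∂μ,
        (UpsOp μ (G k) (wk k) (R k) (B k) (E k) (T (k+1)) w
          - δ • (1 : Matrix (Fin m) (Fin m) ℝ)).PosSemidef := by
      apply ae_posSemidef
      · filter_upwards [hUsym] with w h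
        rw [Matrix.transpose_sub, h, Matrix.transpose_smul, Matrix.transpose_one]
      · intro x
        set xr : Fin m → ℝ := fun i => ((x i : ℝ)) with hxr
        have hst := stoch_nonneg (μ := μ) (G k) (hGle k) (wk k) hωm (hwint k) (hw2int k)
          (T (k+1)) CbT hT'm (hTbd (k+1) hk) hT'p
          (fun w => B k w *ᵥ xr) (fun w => E k w *ᵥ xr)
          (Cb * ∑ j, |xr j|) (Cb * ∑ j, |xr j|)
          (fun i => mulVec_coord_sm _ (fun i j => (hmeasBE k hk i j).1) _ i)
          (fun i => mulVec_coord_sm _ (fun i j => (hmeasBE k hk i j).2) _ i)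
          (fun w i => mulVec_coord_bd _ Cb (fun i j => (hbd k hk w).2.2.1 i j) _ i)
          (fun w i => mulVec_coord_bd _ Cb (fun i j => (hbd k hk w).2.2.2.1 i j) _ i)
        have hRq := (hRpos k hk).mono fun w hw => hw.dotProduct_mulVec_nonneg xr
        filter_upwards [hst, hRq] with w h1 h2
        have h1' : 0 ≤ (B k w *ᵥ xr) ⬝ᵥ (cexpM μ (G k) (T (k+1)) w *ᵥ (B k w *ᵥ xr))
            + (B k w *ᵥ xr) ⬝ᵥ (cexpM μ (G k) (fun v => wk k v • T (k+1) v) w *ᵥ (E k w *ᵥ xr))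
            + (E k w *ᵥ xr) ⬝ᵥ (cexpM μ (G k) (fun v => wk k v • T (k+1) v) w *ᵥ (B k w *ᵥ xr))
            + (E k w *ᵥ xr) ⬝ᵥ (cexpM μ (G k) (fun v => wk k v ^ 2 • T (k+1) v) w
                *ᵥ (E k w *ᵥ xr)) := h1
        have h2' : 0 ≤ xr ⬝ᵥ ((R k w - δ • (1 : Matrix (Fin m) (Fin m) ℝ)) *ᵥ xr) := by
          simpa using h2
        have hid : xr ⬝ᵥ ((UpsOp μ (G k) (wk k) (R k) (B k) (E k) (T (k+1)) w
              - δ • (1 : Matrix (Fin m) (Fin m) ℝ)) *ᵥ xr)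
            = xr ⬝ᵥ ((R k w - δ • (1 : Matrix (Fin m) (Fin m) ℝ)) *ᵥ xr)
            + ((B k w *ᵥ xr) ⬝ᵥ (cexpM μ (G k) (T (k+1)) w *ᵥ (B k w *ᵥ xr))
            + (B k w *ᵥ xr) ⬝ᵥ (cexpM μ (G k) (fun v => wk k v • T (k+1) v) w *ᵥ (E k w *ᵥ xr))
            + (E k w *ᵥ xr) ⬝ᵥ (cexpM μ (G k) (fun v => wk k v • T (k+1) v) w *ᵥ (B k w *ᵥ xr))
            + (E k w *ᵥ xr) ⬝ᵥ (cexpM μ (G k) (fun v => wk k v ^ 2 • T (k+1) v) w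
                *ᵥ (E k w *ᵥ xr))) := by
          simp only [UpsOp, Matrix.sub_mulVec, Matrix.add_mulVec, dotProduct_sub, dotProduct_add,
            Matrix.mul_assoc, quad_transfer']
          ring
        rw [hid]
        exact add_nonneg h2' h1'
    -- Υ is a.e. positive definite, hence invertible
    have hUpd : ∀ᵐ w ∂μ, (UpsOp μ (G k) (wk k) (R k) (B k) (E k) (T (k+1)) w).PosDef :=
      hUpsPsd.mono fun w hw => by
        have h2 := Matrix.PosDef.posSemidef_add hw hδ1
        simpa using h2
    have hUiu : ∀ᵐ w ∂μ, IsUnit (UpsOp μ (G k) (wk k) (R k) (B k) (E k) (T (k+1)) w) :=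
      hUpd.mono fun w hw =>
        (Matrix.isUnit_iff_isUnit_det _).mpr (isUnit_iff_ne_zero.mpr hw.det_pos.ne')
    -- the deterministic block matrix is a.e. positive semidefinite
    have hdet : ∀ᵐ w ∂μ,
        (Matrix.fromBlocks (Q k w) ((L k w)ᵀ) (L k w) (R k w)).PosSemidef := by
      filter_upwards [hRpd, hQLpos k hk] with w h1 h2
      haveI := Matrix.invertibleOfIsUnitDet (R k w) (isUnit_iff_ne_zero.mpr h1.det_pos.ne')
      have hc : ((L k w)ᵀ)ᴴ = L k w := by
        rw [Matrix.conjTranspose_eq_transpose_of_trivial, Matrix.transpose_transpose]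
      have hiff := Matrix.PosDef.fromBlocks₂₂ (Q k w) ((L k w)ᵀ) h1
      rw [hc] at hiff
      exact hiff.mpr h2
    -- the full block matrix is a.e. positive semidefinite
    have hK : ∀ᵐ w ∂μ,
        (Matrix.fromBlocks
          (DelOp μ (G k) (wk k) (Q k) (A k) (D k) (T (k+1)) w)
          ((LamOp μ (G k) (wk k) (L k) (A k) (D k) (B k) (E k) (T (k+1)) w)ᵀ)
          (LamOp μ (G k) (wk k) (L k) (A k) (D k) (B k) (E k) (T (k+1)) w)
          (UpsOp μ (G k) (wk k) (R k) (B k) (E k) (T (k+1)) w)).PosSemidef := by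
      apply ae_posSemidef
      · filter_upwards [hDsym, hUsym] with w hD hU
        rw [Matrix.fromBlocks_transpose, Matrix.transpose_transpose, hD, hU]
      · intro z
        set x : Fin n → ℝ := fun i => ((z (Sum.inl i) : ℝ)) with hxdef
        set u : Fin m → ℝ := fun i => ((z (Sum.inr i) : ℝ)) with hudef
        have hz : (fun i => ((z i : ℝ))) = Sum.elim x u := by
          funext i; cases i <;> rfl
        rw [hz]
        have hst := stoch_nonneg (μ := μ) (G k) (hGle k) (wk k) hωm (hwint k) (hw2int k)
          (T (k+1)) CbT hT'm (hTbd (k+1) hk) hT'p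
          (fun w => A k w *ᵥ x + B k w *ᵥ u) (fun w => D k w *ᵥ x + E k w *ᵥ u)
          (Cb * ∑ j, |x j| + Cb * ∑ j, |u j|) (Cb * ∑ j, |x j| + Cb * ∑ j, |u j|)
          (fun i => ((mulVec_coord_sm _ (fun i j => (hmeas k hk i j).1) x i).add
            (mulVec_coord_sm _ (fun i j => (hmeasBE k hk i j).1) u i) : _))
          (fun i => ((mulVec_coord_sm _ (fun i j => (hmeas k hk i j).2.1) x i).add
            (mulVec_coord_sm _ (fun i j => (hmeasBE k hk i j).2) u i) : _))
          (fun w i => (abs_add_le _ _).trans (add_le_add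
            (mulVec_coord_bd _ Cb (fun i j => (hbd k hk w).1 i j) x i)
            (mulVec_coord_bd _ Cb (fun i j => (hbd k hk w).2.2.1 i j) u i)))
          (fun w i => (abs_add_le _ _).trans (add_le_add
            (mulVec_coord_bd _ Cb (fun i j => (hbd k hk w).2.1 i j) x i)
            (mulVec_coord_bd _ Cb (fun i j => (hbd k hk w).2.2.2.1 i j) u i)))
        have hdq := hdet.mono fun w hw => hw.dotProduct_mulVec_nonneg (Sum.elim x u)
        filter_upwards [hst, hdq, hsym0, hsym1, hsym2] with w h1 h2 h0' h1' h2'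
        have h1'' : 0 ≤ (A k w *ᵥ x + B k w *ᵥ u) ⬝ᵥ (cexpM μ (G k) (T (k+1)) w
              *ᵥ (A k w *ᵥ x + B k w *ᵥ u))
            + (A k w *ᵥ x + B k w *ᵥ u) ⬝ᵥ (cexpM μ (G k) (fun v => wk k v • T (k+1) v) w
              *ᵥ (D k w *ᵥ x + E k w *ᵥ u))
            + (D k w *ᵥ x + E k w *ᵥ u) ⬝ᵥ (cexpM μ (G k) (fun v => wk k v • T (k+1) v) w
              *ᵥ (A k w *ᵥ x + B k w *ᵥ u))
            + (D k w *ᵥ x + E k w *ᵥ u) ⬝ᵥ (cexpM μ (G k) (fun v => wk k v ^ 2 • T (k+1) v) w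
              *ᵥ (D k w *ᵥ x + E k w *ᵥ u)) := h1
        have h2'' : 0 ≤ x ⬝ᵥ (Q k w *ᵥ x) + x ⬝ᵥ ((L k w)ᵀ *ᵥ u)
            + (u ⬝ᵥ (L k w *ᵥ x) + u ⬝ᵥ (R k w *ᵥ u)) := by
          simp only [star_trivial, Matrix.fromBlocks_mulVec, Sum.elim_comp_inl,
            Sum.elim_comp_inr, sumElim_dotProduct_sumElim, dotProduct_add] at h2
          linarith
        rw [Matrix.fromBlocks_mulVec]
        simp only [Sum.elim_comp_inl, Sum.elim_comp_inr]
        rw [sumElim_dotProduct_sumElim, dotProduct_add, dotProduct_add]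
        have hid := quad_id (cexpM μ (G k) (T (k+1)) w)
          (cexpM μ (G k) (fun v => wk k v • T (k+1) v) w)
          (cexpM μ (G k) (fun v => wk k v ^ 2 • T (k+1) v) w)
          (Q k w) (A k w) (D k w) (B k w) (E k w) (L k w) (R k w) h0' h1' h2' x u
        simp only [DelOp, LamOp, UpsOp]
        rw [hid]
        exact add_nonneg (by linarith) h1''
    -- conclude for T k
    have hTk : ∀ᵐ w ∂μ, (T k w)ᵀ = T k w ∧ (T k w).PosSemidef := by
      filter_upwards [hK, hUpd, hTrec k hk] with w hKw hUw hrec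
      haveI := Matrix.invertibleOfIsUnitDet
        (UpsOp μ (G k) (wk k) (R k) (B k) (E k) (T (k+1)) w)
        (isUnit_iff_ne_zero.mpr hUw.det_pos.ne')
      have hc : ((LamOp μ (G k) (wk k) (L k) (A k) (D k) (B k) (E k) (T (k+1)) w)ᵀ)ᴴ
          = LamOp μ (G k) (wk k) (L k) (A k) (D k) (B k) (E k) (T (k+1)) w := by
        rw [Matrix.conjTranspose_eq_transpose_of_trivial, Matrix.transpose_transpose]
      have hiff := Matrix.PosDef.fromBlocks₂₂
        (DelOp μ (G k) (wk k) (Q k) (A k) (D k) (T (k+1)) w)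
        ((LamOp μ (G k) (wk k) (L k) (A k) (D k) (B k) (E k) (T (k+1)) w)ᵀ) hUw
      rw [hc] at hiff
      have hpsd := hiff.mp hKw
      rw [hrec]
      refine ⟨?_, hpsd⟩
      rw [← Matrix.conjTranspose_eq_transpose_of_trivial]
      exact hpsd.1
    exact ⟨hTk, by filter_upwards [hUpsPsd, hUiu] with w a b; exact ⟨a, b⟩⟩
  -- backward induction
  have base : ∀ᵐ w ∂μ, (T N w)ᵀ = T N w ∧ (T N w).PosSemidef := by
    filter_upwards [hGNpos] with w h
    rw [hTN]
    exact ⟨hGNsymm w, h⟩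
  have all : ∀ d k, k + d = N → ∀ᵐ w ∂μ, (T k w)ᵀ = T k w ∧ (T k w).PosSemidef := by
    intro d
    induction d with
    | zero =>
        intro k hkd
        obtain rfl : k = N := by omega
        exact base
    | succ d ih =>
        intro k hkd
        have hkN : k < N := by omega
        exact (step k hkN (ih (k+1) (by omega))).1
  refine ⟨fun k hk => all (N - k) k (by omega), fun k hk => ?_⟩
  exact (step k hk (all (N - (k+1)) (k+1) (by omega))).2
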